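/- Define φ₂(x) := 2·∫₀ˣ e^{t₂²} ∫₀^{t₂} e^{-u₂²} ∫₀^{u₂} e^{t₁²} dt₁ du₂ dt₂. Then φ₂ is an odd function and φ₂(x) = Σ_{n=0}^∞ (x^{2n+3}/((n+1)!·(2n+3)))·Σ_{k=0}^n 1/(2k+1) for all real x. -/

import Mathlib

open Real intervalIntegral

noncomputable def phi2 (x : ℝ) : ℝ :=
  2 * ∫ t₂ in (0 : ℝ)..x, Real.exp (t₂ ^ 2) *
        ∫ u₂ in (0 : ℝ)..t₂, Real.exp (-u₂ ^ 2) *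
          ∫ t₁ in (0 : ℝ)..u₂, Real.exp (t₁ ^ 2)

namespace Phi2Aux

open MeasureTheory TopologicalSpace Set

noncomputable def FF (x : ℝ) : ℝ := ∫ t in (0:ℝ)..x, Real.exp (t ^ 2)
noncomputable def GG (x : ℝ) : ℝ := ∫ u in (0:ℝ)..x, Real.exp (-u ^ 2) * FF u
noncomputable def Hc (n : ℕ) : ℝ := ∑ k ∈ Finset.range (n + 1), (1 : ℝ) / (2 * k + 1)
noncomputable def bb (n : ℕ) (x : ℝ) : ℝ := Hc n * x ^ (2 * n + 2) / (n + 1).factorial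
noncomputable def BB (x : ℝ) : ℝ := ∑' n, bb n x

lemma Hc_nonneg (n : ℕ) : 0 ≤ Hc n :=
  Finset.sum_nonneg fun k _ => by positivity

lemma Hc_le (n : ℕ) : Hc n ≤ n + 1 := by
  calc Hc n ≤ ∑ k ∈ Finset.range (n+1), (1:ℝ) := by
        refine Finset.sum_le_sum (fun k _ => ?_)
        rw [div_le_one (by positivity)]
        have : (0:ℝ) ≤ (k:ℝ) := Nat.cast_nonneg k
        linarith
    _ = n + 1 := by simp

lemma Hc_succ (n : ℕ) : Hc (n + 1) = Hc n + 1 / (2 * (n+1 : ℕ) + 1) :=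
  Finset.sum_range_succ _ _

lemma Hc_zero : Hc 0 = 1 := by simp [Hc]

lemma fact_succ_cast (n : ℕ) : (((n+1).factorial : ℝ)) = (n+1) * n.factorial := by
  rw [Nat.factorial_succ]; push_cast; ring

lemma Hc_div_le (n : ℕ) : Hc n / ((n+1).factorial : ℝ) ≤ 1 / n.factorial := by
  have hpos : (0:ℝ) < n.factorial := by exact_mod_cast n.factorial_pos
  have hpos1 : (0:ℝ) < (n+1).factorial := by exact_mod_cast (n+1).factorial_pos
  rw [div_le_div_iff₀ hpos1 hpos, fact_succ_cast]
  have := Hc_le n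
  nlinarith

lemma summable_CR (C R : ℝ) : Summable (fun n : ℕ => C * R ^ (2 * n) / n.factorial) := by
  have h := (Real.summable_pow_div_factorial (R ^ 2)).mul_left C
  simpa [pow_mul, mul_div_assoc] using h

lemma abs_le_of_mem_uIcc {a b t : ℝ} (ht : t ∈ Set.uIcc a b) : |t| ≤ |a| ⊔ |b| := by
  rcases Set.mem_uIcc.mp ht with ⟨h1, h2⟩ | ⟨h1, h2⟩
  · exact abs_le_max_abs_abs h1 h2
  · exact (abs_le_max_abs_abs h1 h2).trans (le_of_eq (max_comm _ _))

lemma summable_norm_restrict {f : ℕ → C(ℝ, ℝ)} {u : ℕ → ℝ} {a b : ℝ}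
    (hu : Summable u) (h : ∀ n, ∀ t ∈ Set.uIcc a b, |f n t| ≤ u n) :
    Summable fun n : ℕ =>
      ‖(f n).restrict (⟨Set.uIcc a b, isCompact_uIcc⟩ : Compacts ℝ)‖ := by
  refine Summable.of_nonneg_of_le (fun n => norm_nonneg _) (fun n => ?_) hu
  have hun : 0 ≤ u n := le_trans (abs_nonneg _) (h n a Set.left_mem_uIcc)
  rw [ContinuousMap.norm_le _ hun]
  rintro ⟨t, ht⟩
  simpa [Real.norm_eq_abs] using h n t ht

lemma abs_mono_le {c t R : ℝ} (ht : |t| ≤ R) (m : ℕ) : |c * t ^ m| ≤ |c| * R ^ m := by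
  rw [abs_mul, abs_pow]
  gcongr

lemma hasSum_exp_sq (t : ℝ) :
    HasSum (fun k : ℕ => t ^ (2 * k) / k.factorial) (Real.exp (t ^ 2)) := by
  have h := NormedSpace.expSeries_div_hasSum_exp (t ^ 2)
  rw [← Real.exp_eq_exp_ℝ] at h
  simpa [pow_mul] using h

lemma hasSum_FF (x : ℝ) :
    HasSum (fun k : ℕ => x ^ (2 * k + 1) / (k.factorial * (2 * k + 1))) (FF x) := by
  set R := |(0:ℝ)| ⊔ |x| with hRdef
  have hR0 : (0:ℝ) ≤ R := le_trans (abs_nonneg _) le_sup_left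
  set f : ℕ → C(ℝ, ℝ) := fun k =>
    ⟨fun t => ((k.factorial : ℝ))⁻¹ * t ^ (2 * k), by fun_prop⟩ with hfdef
  have hsum : Summable fun n : ℕ =>
      ‖(f n).restrict (⟨Set.uIcc (0:ℝ) x, isCompact_uIcc⟩ : Compacts ℝ)‖ := by
    refine summable_norm_restrict (u := fun n : ℕ => (1:ℝ) * R ^ (2*n) / n.factorial)
      (summable_CR 1 R) (fun n t ht => ?_)
    have h1 := abs_mono_le (c := ((n.factorial : ℝ))⁻¹) (abs_le_of_mem_uIcc ht) (2*n)
    have h2 : |((n.factorial : ℝ))⁻¹| = ((n.factorial : ℝ))⁻¹ := by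
      rw [abs_of_nonneg]; positivity
    simp only [hfdef, ContinuousMap.coe_mk]
    rw [h2] at h1
    calc |((n.factorial : ℝ))⁻¹ * t ^ (2*n)| ≤ ((n.factorial : ℝ))⁻¹ * R ^ (2*n) := h1
      _ = 1 * R ^ (2*n) / n.factorial := by ring
  have h := intervalIntegral.hasSum_intervalIntegral_of_summable_norm (a := 0) (b := x) hsum
  have hptw : ∀ t ∈ Set.uIcc (0:ℝ) x,
      (∑' k, f k t) = Real.exp (t ^ 2) := by
    intro t _
    rw [← (hasSum_exp_sq t).tsum_eq]
    refine tsum_congr fun k => ?_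
    simp [hfdef, div_eq_inv_mul]
  rw [intervalIntegral.integral_congr hptw] at h
  have hterm : (fun k : ℕ => ∫ t in (0:ℝ)..x, f k t)
      = fun k : ℕ => x ^ (2*k+1) / (k.factorial * (2*k+1)) := by
    funext k
    simp only [hfdef, ContinuousMap.coe_mk]
    rw [intervalIntegral.integral_const_mul, integral_pow, zero_pow (by omega), sub_zero]
    have hk : ((k.factorial : ℝ)) ≠ 0 := by positivity
    have hk2 : ((2*k : ℕ) : ℝ) + 1 ≠ 0 := by positivity
    push_cast
    field_simp
  rw [hterm] at h
  exact h

lemma bb_bound {R t : ℝ} (hR : 0 ≤ R) (ht : |t| ≤ R) (n : ℕ) :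
    |bb n t| ≤ R ^ 2 * R ^ (2 * n) / n.factorial := by
  have h1 : |bb n t| = Hc n * |t| ^ (2*n+2) / (n+1).factorial := by
    rw [bb, abs_div, abs_mul, abs_pow, abs_of_nonneg (Hc_nonneg n), Nat.abs_cast]
  rw [h1]
  have h2 : |t| ^ (2*n+2) ≤ R ^ (2*n+2) := pow_le_pow_left₀ (abs_nonneg t) ht _
  have hfac : (0:ℝ) < n.factorial := by exact_mod_cast n.factorial_pos
  calc Hc n * |t| ^ (2*n+2) / (n+1).factorial
      ≤ ((n:ℝ)+1) * R ^ (2*n+2) / ((n+1).factorial) := by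
        gcongr <;> first | exact Hc_le n | exact h2
    _ = R ^ 2 * R ^ (2*n) / n.factorial := by
        rw [fact_succ_cast, pow_add]
        have : ((n:ℝ)+1) ≠ 0 := by positivity
        field_simp
        try ring

lemma summable_bb (x : ℝ) : Summable (fun n => bb n x) := by
  refine Summable.of_norm_bounded (summable_CR (|x|^2) |x|) (fun n => ?_)
  simpa [Real.norm_eq_abs] using bb_bound (abs_nonneg x) (le_refl |x|) n

lemma continuous_bb (n : ℕ) : Continuous (bb n) :=
  (continuous_const.mul (continuous_pow _)).div_const _

lemma continuous_BB : Continuous BB := by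
  rw [continuous_iff_continuousAt]
  intro x
  have hx : x ∈ Metric.ball (0:ℝ) (|x| + 1) := by
    simp [Real.dist_eq]
  have hR : (0:ℝ) ≤ |x| + 1 := by positivity
  have hcon : ContinuousOn (fun y : ℝ => ∑' n, bb n y) (Metric.ball (0:ℝ) (|x| + 1)) := by
    refine continuousOn_tsum (f := fun n t => bb n t)
      (u := fun n => (|x|+1)^2 * (|x|+1)^(2*n) / n.factorial)
      (fun i => (continuous_bb i).continuousOn) (summable_CR ((|x|+1)^2) (|x|+1)) (fun n t ht => ?_)
    have htR : |t| ≤ |x| + 1 := by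
      have h2 := Metric.mem_ball.mp ht
      rw [Real.dist_eq, sub_zero] at h2
      linarith
    simpa [Real.norm_eq_abs] using bb_bound hR htR n
  exact hcon.continuousAt (Metric.isOpen_ball.mem_nhds hx)

lemma cont_exp_sq : Continuous fun t : ℝ => Real.exp (t ^ 2) := by fun_prop

lemma hasDerivAt_FF (x : ℝ) : HasDerivAt FF (Real.exp (x ^ 2)) x :=
  intervalIntegral.integral_hasDerivAt_right (cont_exp_sq.intervalIntegrable _ _)
    (cont_exp_sq.stronglyMeasurableAtFilter _ _) cont_exp_sq.continuousAt

lemma continuous_FF : Continuous FF :=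
  continuous_iff_continuousAt.mpr fun x => (hasDerivAt_FF x).continuousAt

lemma cont_GG_integrand : Continuous fun u : ℝ => Real.exp (-u ^ 2) * FF u := by
  have h1 : Continuous fun u : ℝ => Real.exp (-u ^ 2) := by fun_prop
  exact h1.mul continuous_FF

lemma hasDerivAt_GG (x : ℝ) : HasDerivAt GG (Real.exp (-x ^ 2) * FF x) x :=
  intervalIntegral.integral_hasDerivAt_right (cont_GG_integrand.intervalIntegrable _ _)
    (cont_GG_integrand.stronglyMeasurableAtFilter _ _) cont_GG_integrand.continuousAt

lemma hasSum_uv (x : ℝ) :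
    HasSum (fun n : ℕ => Hc n * x ^ (2*n+4) / ((n+2).factorial : ℝ)
        + x ^ (2*n+2) / (((n+1).factorial : ℝ) * (2*n+1))) (BB x) := by
  have hb : HasSum (fun n => bb n x) (BB x) := (summable_bb x).hasSum
  have hb1 : HasSum (fun n => bb (n+1) x) (BB x - x^2) := by
    have h := (hasSum_nat_add_iff' (f := fun n => bb n x) (g := BB x) 1).mpr hb
    simpa [bb, Hc_zero] using h
  set v : ℕ → ℝ := fun n => x ^ (2*n+2) / (((n+1).factorial : ℝ) * (2*n+1)) with hvdef
  have hv : Summable v := by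
    refine Summable.of_norm_bounded (summable_CR (x^2) |x|) (fun n => ?_)
    have hfac : (0:ℝ) < n.factorial := by exact_mod_cast n.factorial_pos
    have hfac1 : (0:ℝ) < (n+1).factorial := by exact_mod_cast (n+1).factorial_pos
    have h1 : ‖v n‖ = |x| ^ (2*n+2) / (((n+1).factorial : ℝ) * (2*n+1)) := by
      rw [hvdef, Real.norm_eq_abs, abs_div, abs_pow, abs_mul, Nat.abs_cast,
        abs_of_nonneg (show (0:ℝ) ≤ 2*n+1 by positivity)]
    rw [h1]
    calc |x| ^ (2*n+2) / (((n+1).factorial : ℝ) * (2*n+1))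
        ≤ |x| ^ (2*n+2) / (((n.factorial : ℝ)) * 1) := by
          gcongr <;> first
            | positivity
            | exact_mod_cast Nat.factorial_le (Nat.le_succ n)
            | nlinarith [Nat.cast_nonneg (α := ℝ) n]
      _ = x^2 * |x| ^ (2*n) / n.factorial := by
          rw [pow_add, ← sq_abs x]
          ring
  have hvS : HasSum v (∑' n, v n) := hv.hasSum
  have hv1 : HasSum (fun n => v (n+1)) ((∑' n, v n) - x^2) := by
    have h := (hasSum_nat_add_iff' (f := v) (g := ∑' n, v n) 1).mpr hvS
    simpa [hvdef] using h
  have hw : (fun n => v (n+1))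
      = fun n : ℕ => x ^ (2*n+4) / (((n+2).factorial : ℝ) * (2*n+3)) := by
    funext n
    simp only [hvdef]
    norm_num
    ring_nf
  have hbw : (fun n => bb (n+1) x)
      = fun n : ℕ => Hc n * x ^ (2*n+4) / ((n+2).factorial : ℝ)
          + x ^ (2*n+4) / (((n+2).factorial : ℝ) * (2*n+3)) := by
    funext n
    have hfac2 : ((n+2).factorial : ℝ) ≠ 0 := by positivity
    have h23 : ((2:ℝ)*n+3) ≠ 0 := by positivity
    rw [bb, Hc_succ]
    push_cast
    rw [show (2*(n+1)+2 : ℕ) = 2*n+4 by ring,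
      show ((n+1)+1 : ℕ) = n+2 by ring]
    field_simp
    ring
  rw [hbw] at hb1
  rw [hw] at hv1
  have hu : HasSum (fun n : ℕ => Hc n * x ^ (2*n+4) / ((n+2).factorial : ℝ))
      ((BB x - x^2) - ((∑' n, v n) - x^2)) := by
    have h := hb1.sub hv1
    simpa using h
  have hfinal := hu.add hvS
  have : (BB x - x^2) - ((∑' n, v n) - x^2) + (∑' n, v n) = BB x := by ring
  rw [this] at hfinal
  exact hfinal

lemma BB_eq_integral (x : ℝ) :
    BB x = ∫ t in (0:ℝ)..x, (2 * t * BB t + 2 * FF t) := by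
  set R := |(0:ℝ)| ⊔ |x| with hRdef
  have hR0 : (0:ℝ) ≤ R := le_trans (abs_nonneg _) le_sup_left
  set f : ℕ → C(ℝ, ℝ) := fun n =>
    ⟨fun t => 2 * t * bb n t + 2 * (t ^ (2*n+1) / ((n.factorial : ℝ) * (2*n+1))),
      by have := continuous_bb n; fun_prop⟩ with hfdef
  have hsum : Summable fun n : ℕ =>
      ‖(f n).restrict (⟨Set.uIcc (0:ℝ) x, isCompact_uIcc⟩ : Compacts ℝ)‖ := by
    refine summable_norm_restrict
      (u := fun n : ℕ => (2*R^3) * R^(2*n) / n.factorial + (2*R) * R^(2*n) / n.factorial)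
      ((summable_CR (2*R^3) R).add (summable_CR (2*R) R)) (fun n t ht => ?_)
    have htR : |t| ≤ R := abs_le_of_mem_uIcc ht
    have hfac : (0:ℝ) < n.factorial := by exact_mod_cast n.factorial_pos
    have h1 : |2 * t * bb n t| ≤ (2*R^3) * R^(2*n) / n.factorial := by
      have hb := bb_bound hR0 htR n
      have h2t : |2 * t| ≤ 2 * R := by
        rw [abs_mul, abs_two]; gcongr
      calc |2 * t * bb n t| = |2 * t| * |bb n t| := abs_mul _ _
        _ ≤ (2*R) * (R^2 * R^(2*n) / n.factorial) :=
            mul_le_mul h2t hb (abs_nonneg _) (by positivity)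
        _ = (2*R^3) * R^(2*n) / n.factorial := by ring
    have h2 : |2 * (t ^ (2*n+1) / ((n.factorial : ℝ) * (2*n+1)))|
        ≤ (2*R) * R^(2*n) / n.factorial := by
      have e1 : |2 * (t ^ (2*n+1) / ((n.factorial : ℝ) * (2*n+1)))|
          = 2 * |t| ^ (2*n+1) / ((n.factorial : ℝ) * (2*n+1)) := by
        rw [abs_mul, abs_two, abs_div, abs_pow, abs_mul, Nat.abs_cast,
          abs_of_nonneg (show (0:ℝ) ≤ 2*n+1 by positivity)]
        ring
      rw [e1]
      calc 2 * |t| ^ (2*n+1) / ((n.factorial : ℝ) * (2*n+1))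
          ≤ 2 * R ^ (2*n+1) / ((n.factorial : ℝ) * 1) := by
            gcongr <;> first
              | positivity
              | (exact pow_le_pow_left₀ (abs_nonneg t) htR _)
              | nlinarith [Nat.cast_nonneg (α := ℝ) n]
        _ = (2*R) * R^(2*n) / n.factorial := by
            rw [pow_succ]
            ring
    calc |f n t| ≤ |2 * t * bb n t| + |2 * (t ^ (2*n+1) / ((n.factorial : ℝ) * (2*n+1)))| := by
          simp only [hfdef, ContinuousMap.coe_mk]
          exact abs_add_le _ _
      _ ≤ (2*R^3) * R^(2*n) / n.factorial + (2*R) * R^(2*n) / n.factorial := add_le_add h1 h2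
  have hint := intervalIntegral.hasSum_intervalIntegral_of_summable_norm (a := 0) (b := x) hsum
  have hptw : ∀ t ∈ Set.uIcc (0:ℝ) x,
      (∑' n, f n t) = 2 * t * BB t + 2 * FF t := by
    intro t _
    have hA : HasSum (fun n => 2 * t * bb n t) (2 * t * BB t) :=
      (summable_bb t).hasSum.mul_left _
    have hB : HasSum (fun n : ℕ => 2 * (t ^ (2*n+1) / ((n.factorial : ℝ) * (2*n+1)))) (2 * FF t) :=
      (hasSum_FF t).mul_left 2
    have := (hA.add hB).tsum_eq
    rw [← this]
    exact tsum_congr fun n => by simp [hfdef]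
  rw [intervalIntegral.integral_congr hptw] at hint
  have hterm : (fun n : ℕ => ∫ t in (0:ℝ)..x, f n t)
      = fun n : ℕ => Hc n * x ^ (2*n+4) / ((n+2).factorial : ℝ)
          + x ^ (2*n+2) / (((n+1).factorial : ℝ) * (2*n+1)) := by
    funext n
    have e1 : ∀ t : ℝ, f n t = (2 * Hc n / ((n+1).factorial : ℝ)) * t ^ (2*n+3)
        + (2 / ((n.factorial : ℝ) * (2*n+1))) * t ^ (2*n+1) := by
      intro t
      simp only [hfdef, ContinuousMap.coe_mk, bb]
      ring
    rw [intervalIntegral.integral_congr (g :=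
      fun t => (2 * Hc n / ((n+1).factorial : ℝ)) * t ^ (2*n+3)
        + (2 / ((n.factorial : ℝ) * (2*n+1))) * t ^ (2*n+1)) (fun t _ => e1 t)]
    rw [intervalIntegral.integral_add
      (f := fun t => (2 * Hc n / ((n+1).factorial : ℝ)) * t ^ (2*n+3))
      (g := fun t => (2 / ((n.factorial : ℝ) * (2*n+1))) * t ^ (2*n+1))
      (by apply Continuous.intervalIntegrable; fun_prop)
      (by apply Continuous.intervalIntegrable; fun_prop),
      intervalIntegral.integral_const_mul, intervalIntegral.integral_const_mul,
      integral_pow, integral_pow, zero_pow (by omega : 2*n+3+1 ≠ 0),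
      zero_pow (by omega : 2*n+1+1 ≠ 0)]
    have hfac : (0:ℝ) < n.factorial := by exact_mod_cast n.factorial_pos
    have hfac1 : ((n+1).factorial : ℝ) = (n+1) * n.factorial := fact_succ_cast n
    have hfac2 : ((n+2).factorial : ℝ) = (n+2) * ((n+1) * n.factorial) := by
      rw [show (n+2 : ℕ) = (n+1)+1 by ring, fact_succ_cast, fact_succ_cast]
      push_cast; ring
    rw [hfac1, hfac2]
    push_cast
    have h1 : ((n:ℝ)+1) ≠ 0 := by positivity
    have h2 : ((n:ℝ)+2) ≠ 0 := by positivity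
    have h3 : ((2:ℝ)*n+1) ≠ 0 := by positivity
    have h4 : ((2:ℝ)*n+3+1) ≠ 0 := by positivity
    have h5 : ((2:ℝ)*n+1+1) ≠ 0 := by positivity
    field_simp
    ring
  rw [hterm] at hint
  exact (hasSum_uv x).unique hint

lemma continuous_psi : Continuous (fun t : ℝ => 2 * t * BB t + 2 * FF t) :=
  ((continuous_const.mul continuous_id).mul continuous_BB).add
    (continuous_const.mul continuous_FF)

lemma hasDerivAt_BB (x : ℝ) : HasDerivAt BB (2 * x * BB x + 2 * FF x) x := by
  have h := intervalIntegral.integral_hasDerivAt_right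
    (continuous_psi.intervalIntegrable 0 x)
    (continuous_psi.stronglyMeasurableAtFilter _ _) continuous_psi.continuousAt
  exact h.congr_of_eventuallyEq (Filter.Eventually.of_forall fun y => BB_eq_integral y)

lemma BB_zero : BB 0 = 0 := by
  have h0 : ∀ n : ℕ, bb n 0 = 0 := fun n => by
    simp [bb, zero_pow (by omega : 2*n+2 ≠ 0)]
  calc BB 0 = ∑' _ : ℕ, (0:ℝ) := tsum_congr h0
    _ = 0 := tsum_zero

lemma key (t : ℝ) : Real.exp (t ^ 2) * GG t = BB t / 2 := by
  set h : ℝ → ℝ := fun y => Real.exp (-y ^ 2) * BB y - 2 * GG y with hdef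
  have hder : ∀ y, HasDerivAt h 0 y := by
    intro y
    have h1 : HasDerivAt (fun y : ℝ => -y ^ 2) (-(2 * y)) y := by
      simpa using (hasDerivAt_pow 2 y).fun_neg
    have h2 : HasDerivAt (fun y : ℝ => Real.exp (-y ^ 2))
        (Real.exp (-y ^ 2) * -(2 * y)) y := h1.exp
    have h3 := (h2.mul (hasDerivAt_BB y)).sub ((hasDerivAt_GG y).const_mul 2)
    have e : Real.exp (-y ^ 2) * -(2 * y) * BB y
        + Real.exp (-y ^ 2) * (2 * y * BB y + 2 * FF y)
        - 2 * (Real.exp (-y ^ 2) * FF y) = 0 := by ring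
    rw [e] at h3
    exact h3
  have hconst : ∀ y, h y = h 0 := fun y =>
    is_const_of_deriv_eq_zero (fun z => (hder z).differentiableAt)
      (fun z => (hder z).deriv) y 0
  have h00 : h 0 = 0 := by
    simp [hdef, BB_zero, GG, intervalIntegral.integral_same]
  have hEq : Real.exp (-t ^ 2) * BB t = 2 * GG t := by
    have := hconst t
    rw [h00] at this
    simp only [hdef] at this
    linarith
  have hone : Real.exp (t ^ 2) * Real.exp (-t ^ 2) = 1 := by
    rw [← Real.exp_add]; simp
  linear_combination (-(Real.exp (t ^ 2)) / 2) * hEq + (BB t / 2) * hone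

lemma phi2_eq (x : ℝ) : phi2 x = ∫ t in (0:ℝ)..x, BB t := by
  have h0 : phi2 x = 2 * ∫ t in (0:ℝ)..x, Real.exp (t ^ 2) * GG t := rfl
  rw [h0, intervalIntegral.integral_congr (g := fun t => BB t / 2)
    (fun t _ => key t), intervalIntegral.integral_div]
  ring

lemma main (x : ℝ) :
    HasSum (fun n : ℕ =>
        x ^ (2 * n + 3) / (((n + 1).factorial : ℝ) * (2 * n + 3))
          * ∑ k ∈ Finset.range (n + 1), (1 : ℝ) / (2 * k + 1))
      (phi2 x) := by
  rw [phi2_eq]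
  set R := |(0:ℝ)| ⊔ |x| with hRdef
  have hR0 : (0:ℝ) ≤ R := le_trans (abs_nonneg _) le_sup_left
  set f : ℕ → C(ℝ, ℝ) := fun n => ⟨fun t => bb n t, continuous_bb n⟩ with hfdef
  have hsum : Summable fun n : ℕ =>
      ‖(f n).restrict (⟨Set.uIcc (0:ℝ) x, isCompact_uIcc⟩ : Compacts ℝ)‖ := by
    refine summable_norm_restrict (u := fun n : ℕ => R^2 * R^(2*n) / n.factorial)
      (summable_CR _ _) (fun n t ht => ?_)
    simpa [hfdef] using bb_bound hR0 (abs_le_of_mem_uIcc ht) n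
  have h := intervalIntegral.hasSum_intervalIntegral_of_summable_norm (a := 0) (b := x) hsum
  have hval : (∫ t in (0:ℝ)..x, ∑' n, f n t) = ∫ t in (0:ℝ)..x, BB t := by
    refine intervalIntegral.integral_congr (fun t _ => ?_)
    simp only [hfdef, ContinuousMap.coe_mk]
    rfl
  rw [hval] at h
  have hterm : (fun n : ℕ => ∫ t in (0:ℝ)..x, f n t)
      = fun n : ℕ => x ^ (2 * n + 3) / (((n + 1).factorial : ℝ) * (2 * n + 3))
          * ∑ k ∈ Finset.range (n + 1), (1 : ℝ) / (2 * k + 1) := by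
    funext n
    have e1 : ∀ t : ℝ, f n t = (Hc n / ((n+1).factorial : ℝ)) * t ^ (2*n+2) := by
      intro t
      simp only [hfdef, ContinuousMap.coe_mk, bb]
      ring
    rw [intervalIntegral.integral_congr (g := fun t => (Hc n / ((n+1).factorial : ℝ)) * t ^ (2*n+2))
      (fun t _ => e1 t), intervalIntegral.integral_const_mul, integral_pow,
      zero_pow (by omega : 2*n+2+1 ≠ 0)]
    have hfac1 : ((n+1).factorial : ℝ) ≠ 0 := by positivity
    have h3 : ((2*n+2 : ℕ) : ℝ) + 1 ≠ 0 := by positivity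
    have hHc : (∑ k ∈ Finset.range (n + 1), (1 : ℝ) / (2 * k + 1)) = Hc n := rfl
    rw [hHc]
    push_cast
    field_simp
    ring
  rw [hterm] at h
  exact h

end Phi2Aux

theorem phi2_odd_and_series (x : ℝ) :
    phi2 (-x) = -phi2 x ∧
    HasSum (fun n : ℕ =>
        x ^ (2 * n + 3) / (((n + 1).factorial : ℝ) * (2 * n + 3))
          * ∑ k ∈ Finset.range (n + 1), (1 : ℝ) / (2 * k + 1))
      (phi2 x) := by
  constructor
  · have h1 := Phi2Aux.main x
    have h2 := Phi2Aux.main (-x)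
    have he : (fun n : ℕ =>
        (-x) ^ (2 * n + 3) / (((n + 1).factorial : ℝ) * (2 * n + 3))
          * ∑ k ∈ Finset.range (n + 1), (1 : ℝ) / (2 * k + 1))
        = fun n : ℕ =>
          -(x ^ (2 * n + 3) / (((n + 1).factorial : ℝ) * (2 * n + 3))
            * ∑ k ∈ Finset.range (n + 1), (1 : ℝ) / (2 * k + 1)) := by
      funext n
      rw [Odd.neg_pow ⟨n+1, by ring⟩]
      ring
    rw [he] at h2
    exact h2.unique h1.neg
  · exact Phi2Aux.main x
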